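/- Let X be a topological space, α an aperiodic homeomorphism of X, F a Banach function space on X satisfying condition Ω_α, and w a measurable positive function on X such that w and w⁻¹ = 1/w are bounded, so that T̃_{α,w}(f) = w·(f∘α) is an invertible bounded linear operator on F. Then the following are equivalent: (i) T̃_{α,w} is topologically semi-transitive on F; (ii) for each compact subset K of X there exist a sequence (E_k) of Borel subsets of K and a strictly increasing sequence (n_k) of natural numbers such that lim_{k→∞} ‖χ_{K∖E_k}‖_F = 0 and lim_{k→∞} [ ( sup_{x∈E_k} ∏_{j=0}^{n_k−1} (w(α^j(x)))⁻¹ ) · ( sup_{x∈E_k} ∏_{j=1}^{n_k} w(α^{−j}(x)) ) ] = 0. -/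

import Mathlib

open Filter Finset

lemma prodIcc_eq_range' (f : ℕ → ℝ) (n : ℕ) :
    ∏ i ∈ Icc 1 n, f i = ∏ i ∈ range n, f (i + 1) := by
  induction n with
  | zero => simp
  | succ n ih => rw [Finset.prod_Icc_succ_top (by omega), ih, Finset.prod_range_succ]

/-- A bounded linear operator `T` on a complex normed space is *topologically
semi-transitive* if for every pair of nonempty open subsets `O₁, O₂` there exist
`n ∈ ℕ` and `λ ∈ ℂ \ {0}` such that `λ • T^n(O₁) ∩ O₂ ≠ ∅`. -/
def IsSemiTransitive {E : Type*} [NormedAddCommGroup E] [NormedSpace ℂ E]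
    (T : E →L[ℂ] E) : Prop :=
  ∀ O₁ O₂ : Set E, IsOpen O₁ → IsOpen O₂ → O₁.Nonempty → O₂.Nonempty →
    ∃ (n : ℕ) (lam : ℂ), 1 ≤ n ∧ lam ≠ 0 ∧ ∃ f ∈ O₁, lam • (T ^ n) f ∈ O₂

set_option maxHeartbeats 4000000 in
/-- Characterization of topologically semi-transitive weighted composition operators on a
solid Banach function space `𝓕` (realized, via the injective linear map `ι`, as a space
of Borel measurable functions on `X`) satisfying condition `Ω_α`. -/
theorem semi_transitive_iff_weight_condition_solid
    {X : Type*} [TopologicalSpace X] [MeasurableSpace X] [BorelSpace X]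
    {𝓕 : Type*} [NormedAddCommGroup 𝓕] [NormedSpace ℂ 𝓕] [CompleteSpace 𝓕]
    (ι : 𝓕 →ₗ[ℂ] (X → ℂ)) (hι_inj : Function.Injective ι)
    (hι_meas : ∀ f : 𝓕, Measurable (ι f))
    (α : X ≃ₜ X)
    (haper : ∀ K : Set X, IsCompact K →
      ∃ N : ℕ, 0 < N ∧ ∀ n ≥ N, ((⇑α)^[n] '' K) ∩ K = ∅)
    -- `𝓕` is solid:
    (hsolid : ∀ (f : 𝓕) (g : X → ℂ), Measurable g →
      (∀ x, ‖g x‖ ≤ ‖ι f x‖) → ∃ g' : 𝓕, ι g' = g ∧ ‖g'‖ ≤ ‖f‖)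
    -- `𝓕` is `α`-invariant:
    (hinv : ∀ f : 𝓕, ∃ f₁ f₂ : 𝓕,
      ι f₁ = (ι f) ∘ ⇑α ∧ ‖f₁‖ = ‖f‖ ∧ ι f₂ = (ι f) ∘ ⇑α.symm ∧ ‖f₂‖ = ‖f‖)
    -- characteristic functions of compact sets belong to `𝓕`:
    (hchi : ∀ E : Set X, IsCompact E → ∃ g : 𝓕, ι g = Set.indicator E 1)
    -- bounded compactly supported elements are dense in `𝓕`:
    (hdense : Dense {f : 𝓕 | (∃ C, ∀ x, ‖ι f x‖ ≤ C) ∧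
      ∃ K : Set X, IsCompact K ∧ ∀ x ∉ K, ι f x = 0})
    (w : X → ℝ) (hw_meas : Measurable w) (hw_pos : ∀ x, 0 < w x)
    (hw_bdd : ∃ C, ∀ x, w x ≤ C) (hw_inv_bdd : ∃ C, ∀ x, (w x)⁻¹ ≤ C)
    (T S : 𝓕 →L[ℂ] 𝓕)
    (hT : ∀ (f : 𝓕) (x : X), ι (T f) x = (w x : ℂ) * ι f (α x))
    (hST : ∀ f, S (T f) = f) (hTS : ∀ f, T (S f) = f) :
    IsSemiTransitive T ↔
      ∀ K : Set X, IsCompact K →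
        ∃ (E : ℕ → Set X) (n : ℕ → ℕ),
          (∀ k, MeasurableSet (E k)) ∧ (∀ k, E k ⊆ K) ∧
          StrictMono n ∧ (∀ k, 1 ≤ n k) ∧
          (∃ g : ℕ → 𝓕, (∀ k, ι (g k) = Set.indicator (K \ E k) 1) ∧
            Tendsto (fun k => ‖g k‖) atTop (nhds 0)) ∧
          Tendsto (fun k =>
              sSup ((fun x => ∏ j ∈ range (n k), (w ((⇑α)^[j] x))⁻¹) '' E k) *
              sSup ((fun x => ∏ j ∈ Icc 1 (n k), w ((⇑α.symm)^[j] x)) '' E k))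
            atTop (nhds 0) := by
  -- ## Shared auxiliary facts
  have hai : ∀ (n : ℕ) (x : X), (⇑α)^[n] ((⇑α.symm)^[n] x) = x :=
    fun n x => (Function.LeftInverse.iterate α.apply_symm_apply n) x
  have hai' : ∀ (n : ℕ) (x : X), (⇑α.symm)^[n] ((⇑α)^[n] x) = x :=
    fun n x => (Function.LeftInverse.iterate α.symm_apply_apply n) x
  have hreidx : ∀ (n : ℕ) (z : X),
      ∏ j ∈ range n, w ((⇑α)^[j] ((⇑α.symm)^[n] z)) = ∏ j ∈ Icc 1 n, w ((⇑α.symm)^[j] z) := by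
    intro n z
    have hterm : ∀ j ∈ range n, w ((⇑α)^[j] ((⇑α.symm)^[n] z)) = w ((⇑α.symm)^[n - j] z) := by
      intro j hj
      rw [mem_range] at hj
      have h1 : (⇑α.symm)^[n] z = (⇑α.symm)^[j] ((⇑α.symm)^[n - j] z) := by
        rw [← Function.iterate_add_apply]
        congr 1; omega
      rw [h1, Function.LeftInverse.iterate α.apply_symm_apply j]
    rw [Finset.prod_congr rfl hterm, prodIcc_eq_range']
    rw [← Finset.prod_range_reflect (fun j => w ((⇑α.symm)^[j + 1] z)) n]
    apply Finset.prod_congr rfl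
    intro j hj; rw [mem_range] at hj
    congr 2; omega
  have hreidx2 : ∀ (n : ℕ) (y : X),
      ∏ j ∈ Icc 1 n, w ((⇑α.symm)^[j] ((⇑α)^[n] y)) = ∏ j ∈ range n, w ((⇑α)^[j] y) := by
    intro n y
    have hterm : ∀ j ∈ Icc 1 n, w ((⇑α.symm)^[j] ((⇑α)^[n] y)) = w ((⇑α)^[n - j] y) := by
      intro j hj
      rw [mem_Icc] at hj
      have h1 : (⇑α)^[n] y = (⇑α)^[j] ((⇑α)^[n - j] y) := by
        rw [← Function.iterate_add_apply]
        congr 1; omega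
      rw [h1, Function.LeftInverse.iterate α.symm_apply_apply j]
    rw [Finset.prod_congr rfl hterm, prodIcc_eq_range']
    rw [← Finset.prod_range_reflect (fun j => w ((⇑α)^[j] y)) n]
    apply Finset.prod_congr rfl
    intro j hj; rw [mem_range] at hj
    congr 2; omega
  have hTn : ∀ (n : ℕ) (f : 𝓕) (x : X),
      ι ((T ^ n) f) x = ((∏ j ∈ range n, w ((⇑α)^[j] x) : ℝ) : ℂ) * ι f ((⇑α)^[n] x) := by
    intro n
    induction n with
    | zero => intro f x; simp
    | succ n ih =>
      intro f x
      have h1 : (T ^ (n + 1)) f = (T ^ n) (T f) := by rw [pow_succ]; rfl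
      rw [h1, ih (T f) x, hT f ((⇑α)^[n] x), Finset.prod_range_succ,
        Function.iterate_succ_apply' (⇑α) n x]
      push_cast; ring
  have hTSn : ∀ (n : ℕ) (f : 𝓕), (T ^ n) ((S ^ n) f) = f := by
    intro n
    induction n with
    | zero => intro f; simp
    | succ n ih =>
      intro f
      have h1 : (S ^ (n + 1)) f = (S ^ n) (S f) := by rw [pow_succ]; rfl
      have h2 : ∀ g, (T ^ (n + 1)) g = T ((T ^ n) g) := by intro g; rw [pow_succ']; rfl
      rw [h1, h2, ih (S f), hTS]
  have hSn : ∀ (n : ℕ) (h : 𝓕) (x : X),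
      ι ((S ^ n) h) x
        = ((∏ j ∈ Icc 1 n, w ((⇑α.symm)^[j] x) : ℝ) : ℂ)⁻¹ * ι h ((⇑α.symm)^[n] x) := by
    intro n h x
    have key := hTn n ((S ^ n) h) ((⇑α.symm)^[n] x)
    rw [hTSn n h, hai n x, hreidx n x] at key
    have hpos : (0:ℝ) < ∏ j ∈ Icc 1 n, w ((⇑α.symm)^[j] x) :=
      Finset.prod_pos fun j _ => hw_pos _
    have hcast : ((∏ j ∈ Icc 1 n, w ((⇑α.symm)^[j] x) : ℝ) : ℂ)
        = ∏ j ∈ Icc 1 n, ((w ((⇑α.symm)^[j] x) : ℝ) : ℂ) := by push_cast; ring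
    have hne : (∏ j ∈ Icc 1 n, ((w ((⇑α.symm)^[j] x) : ℝ) : ℂ)) ≠ 0 := by
      rw [← hcast]; exact_mod_cast hpos.ne'
    rw [hcast, key, hcast, inv_mul_cancel_left₀ hne]
  have hmk : ∀ (c : ℝ) (m : 𝓕) (g : X → ℂ), 0 ≤ c → Measurable g →
      (∀ z, ‖g z‖ ≤ c * ‖ι m z‖) → ∃ d : 𝓕, ι d = g ∧ ‖d‖ ≤ c * ‖m‖ := by
    intro c m g hc hg hb
    obtain ⟨d, hd1, hd2⟩ := hsolid ((c : ℂ) • m) g hg (by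
      intro z
      rw [map_smul]
      simp only [Pi.smul_apply, norm_smul, Complex.norm_real, Real.norm_eq_abs,
        abs_of_nonneg hc]
      exact hb z)
    refine ⟨d, hd1, hd2.trans ?_⟩
    rw [norm_smul]
    simp [Complex.norm_real, abs_of_nonneg hc]
  have hnb : ∀ (h : 𝓕) (c : ℝ) (m : 𝓕), 0 ≤ c →
      (∀ z, ‖ι h z‖ ≤ c * ‖ι m z‖) → ‖h‖ ≤ c * ‖m‖ := by
    intro h c m hc hb
    obtain ⟨d, hd1, hd2⟩ := hmk c m (ι h) hc (hι_meas h) hb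
    rwa [hι_inj hd1] at hd2
  have hmeasSet : ∀ (g : 𝓕) (A : Set X), ι g = Set.indicator A 1 → MeasurableSet A := by
    intro g A hg
    have : A = (ι g) ⁻¹' {1} := by
      ext z
      simp only [Set.mem_preimage, Set.mem_singleton_iff, hg]
      by_cases hz : z ∈ A
      · simp [Set.indicator_of_mem hz, hz]
      · simp [Set.indicator_of_notMem hz, hz]
    rw [this]
    exact (hι_meas g) (measurableSet_singleton 1)
  have heval : ∀ x : X, ∃ e : ℝ, 0 < e ∧ ∀ g : 𝓕, ‖ι g x‖ * e ≤ ‖g‖ := by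
    intro x
    obtain ⟨χx, hχx⟩ := hchi {x} isCompact_singleton
    have hxm : MeasurableSet {x} := hmeasSet χx {x} hχx
    refine ⟨‖χx‖, ?_, ?_⟩
    · rw [norm_pos_iff]
      intro h0
      rw [h0, map_zero] at hχx
      have := congrFun hχx x
      simp [Set.indicator_of_mem (Set.mem_singleton x)] at this
    · intro g
      obtain ⟨d, hd1, hd2⟩ := hsolid g (Set.indicator {x} fun _ => ι g x)
        (measurable_const.indicator hxm) (by
          intro z
          by_cases hz : z ∈ ({x} : Set X)
          · rw [Set.indicator_of_mem hz]
            rw [Set.mem_singleton_iff] at hz; rw [hz]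
          · rw [Set.indicator_of_notMem hz]; simp)
      have hd : d = ι g x • χx := by
        apply hι_inj
        rw [hd1, map_smul, hχx]
        funext z
        by_cases hz : z ∈ ({x} : Set X)
        · simp [Set.indicator_of_mem hz]
        · simp [Set.indicator_of_notMem hz]
      rw [hd, norm_smul] at hd2
      exact hd2
  have hinvIter : ∀ (n : ℕ) (f : 𝓕), ∃ f₁ f₂ : 𝓕,
      ι f₁ = ι f ∘ (⇑α)^[n] ∧ ‖f₁‖ = ‖f‖ ∧ ι f₂ = ι f ∘ (⇑α.symm)^[n] ∧ ‖f₂‖ = ‖f‖ := by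
    intro n
    induction n with
    | zero => intro f; exact ⟨f, f, by simp, rfl, by simp, rfl⟩
    | succ n ih =>
      intro f
      obtain ⟨f₁, f₂, h1, h2, h3, h4⟩ := ih f
      obtain ⟨g₁, -, hg1, hg2, -, -⟩ := hinv f₁
      obtain ⟨-, g₂, -, -, hg3, hg4⟩ := hinv f₂
      refine ⟨g₁, g₂, ?_, by rw [hg2, h2], ?_, by rw [hg4, h4]⟩
      · rw [hg1, h1]; funext z
        simp [Function.comp, Function.iterate_succ_apply]
      · rw [hg3, h3]; funext z
        simp [Function.comp, Function.iterate_succ_apply]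
  have hres : ∀ (f : 𝓕) (A : Set X), MeasurableSet A →
      ∃ fA : 𝓕, ι fA = Set.indicator A (ι f) ∧ ‖fA‖ ≤ 1 * ‖f‖ := by
    intro f A hA
    refine hmk 1 f (Set.indicator A (ι f)) one_pos.le ((hι_meas f).indicator hA) ?_
    intro z
    rw [one_mul]
    by_cases hz : z ∈ A
    · rw [Set.indicator_of_mem hz]
    · rw [Set.indicator_of_notMem hz]; simp
  constructor
  · -- ## Forward direction
    intro hsemi K hK
    by_cases hKne : K.Nonempty
    swap
    · -- K is empty
      have hKe : K = ∅ := Set.not_nonempty_iff_eq_empty.mp hKne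
      refine ⟨fun _ => ∅, fun k => k + 1, fun _ => MeasurableSet.empty,
        fun _ => Set.empty_subset K, fun a b h => Nat.add_lt_add_right h 1,
        fun k => Nat.le_add_left 1 k, ⟨fun _ => 0, ?_, ?_⟩, ?_⟩
      · intro k
        rw [map_zero, hKe, Set.empty_diff, Set.indicator_empty]
        rfl
      · simpa using (tendsto_const_nhds : Tendsto (fun _ : ℕ => (0:ℝ)) atTop (nhds 0))
      · simp only [Set.image_empty, Real.sSup_empty, mul_zero]
        simpa using (tendsto_const_nhds : Tendsto (fun _ : ℕ => (0:ℝ)) atTop (nhds 0))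
    obtain ⟨N, hNpos, hN⟩ := haper K hK
    obtain ⟨χK, hχK⟩ := hchi K hK
    have hKm : MeasurableSet K := hmeasSet χK K hχK
    choose e hepos heb using heval
    set P : ℕ → X → ℝ := fun nn z => ∏ j ∈ range nn, w ((⇑α)^[j] z) with hPdef
    have hPpos : ∀ nn z, 0 < P nn z := fun nn z => Finset.prod_pos fun j _ => hw_pos _
    -- there are points of K leaving K after exactly nn steps (in both directions)
    have hnoret : ∀ nn : ℕ, 1 ≤ nn →
        (∃ x ∈ K, (⇑α)^[nn] x ∉ K) ∧ (∃ y ∈ K, (⇑α.symm)^[nn] y ∉ K) := by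
      intro nn hnn
      obtain ⟨x₀, hx₀⟩ := hKne
      have hge : N ≤ N * nn := Nat.le_mul_of_pos_right N (by omega)
      constructor
      · by_contra hcon
        push_neg at hcon
        have hiter : ∀ mm : ℕ, ∀ x ∈ K, (⇑α)^[mm * nn] x ∈ K := by
          intro mm
          induction mm with
          | zero => intro x hx; simpa using hx
          | succ mm ih =>
            intro x hx
            have hrw : (mm + 1) * nn = nn + mm * nn := by ring
            rw [hrw, Function.iterate_add_apply]
            exact hcon _ (ih x hx)
        have hd := hN (N * nn) hge
        have hmem : (⇑α)^[N * nn] x₀ ∈ ((⇑α)^[N * nn] '' K) ∩ K :=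
          ⟨Set.mem_image_of_mem _ hx₀, hiter N x₀ hx₀⟩
        rw [hd] at hmem
        exact hmem
      · by_contra hcon
        push_neg at hcon
        have hiter : ∀ mm : ℕ, ∀ x ∈ K, (⇑α.symm)^[mm * nn] x ∈ K := by
          intro mm
          induction mm with
          | zero => intro x hx; simpa using hx
          | succ mm ih =>
            intro x hx
            have hrw : (mm + 1) * nn = nn + mm * nn := by ring
            rw [hrw, Function.iterate_add_apply]
            exact hcon _ (ih x hx)
        have hd := hN (N * nn) hge
        have hmem : x₀ ∈ ((⇑α)^[N * nn] '' K) ∩ K :=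
          ⟨⟨(⇑α.symm)^[N * nn] x₀, hiter N x₀ hx₀, hai (N * nn) x₀⟩, hx₀⟩
        rw [hd] at hmem
        exact hmem
    -- thresholds ruling out small powers
    have key : ∀ nn : ℕ, ∃ τ : ℝ, 0 < τ ∧ (1 ≤ nn → ∀ (f : 𝓕) (lam : ℂ),
        ‖f - χK‖ < τ → ‖lam • (T ^ nn) f - χK‖ < τ → False) := by
      intro nn
      by_cases hnn : 1 ≤ nn
      swap
      · exact ⟨1, one_pos, fun h => absurd h hnn⟩
      obtain ⟨⟨x, hxK, hxn⟩, ⟨y, hyK, hyn⟩⟩ := hnoret nn hnn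
      set x' : X := (⇑α.symm)^[nn] y with hx'def
      have hx'K : x' ∉ K := hyn
      have hax' : (⇑α)^[nn] x' = y := hai nn y
      set c : ℝ := e ((⇑α)^[nn] x) * e x' * P nn x' / (4 * P nn x) with hcdef
      have hcpos : 0 < c :=
        div_pos (mul_pos (mul_pos (hepos _) (hepos _)) (hPpos _ _))
          (mul_pos (by norm_num) (hPpos _ _))
      set τ : ℝ := min (min (e x / 2) (e y / 2)) (Real.sqrt c / 2) with hτdef
      have hτpos : 0 < τ :=
        lt_min (lt_min (half_pos (hepos x)) (half_pos (hepos y)))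
          (half_pos (Real.sqrt_pos.mpr hcpos))
      refine ⟨τ, hτpos, fun _ f lam h1 h2 => ?_⟩
      have hτex : τ ≤ e x / 2 := (min_le_left _ _).trans (min_le_left _ _)
      have hτey : τ ≤ e y / 2 := (min_le_left _ _).trans (min_le_right _ _)
      have hτc : τ ^ 2 ≤ c / 4 := by
        have h3 : τ ≤ Real.sqrt c / 2 := min_le_right _ _
        nlinarith [Real.sq_sqrt hcpos.le, Real.sqrt_nonneg c]
      have hev' : ∀ (h : 𝓕) (z : X), ‖h‖ < τ → ‖ι h z‖ * e z < τ :=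
        fun h z hh => lt_of_le_of_lt (heb z h) hh
      -- pointwise information
      have hfx' := hev' (f - χK) ((⇑α)^[nn] x) h1
      rw [map_sub, Pi.sub_apply, hχK, Set.indicator_of_notMem hxn, sub_zero] at hfx'
      have hfy := hev' (f - χK) y h1
      rw [map_sub, Pi.sub_apply, hχK, Set.indicator_of_mem hyK, Pi.one_apply] at hfy
      have hgx := hev' (lam • (T ^ nn) f - χK) x h2
      rw [map_sub, Pi.sub_apply, hχK, Set.indicator_of_mem hxK, Pi.one_apply, map_smul,
        Pi.smul_apply, hTn nn f x, smul_eq_mul, ← mul_assoc] at hgx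
      have hgx' := hev' (lam • (T ^ nn) f - χK) x' h2
      rw [map_sub, Pi.sub_apply, hχK, Set.indicator_of_notMem hx'K, sub_zero, map_smul,
        Pi.smul_apply, hTn nn f x', hax', smul_eq_mul, ← mul_assoc] at hgx'
      have hPapp : ∀ (mm : ℕ) (z : X), (∏ j ∈ range mm, w ((⇑α)^[j] z)) = P mm z :=
        fun _ _ => rfl
      rw [hPapp] at hgx hgx'
      -- clean up
      have hfyb : 1 / 2 < ‖ι f y‖ := by
        have hb : (1:ℝ) - ‖ι f y‖ ≤ ‖ι f y - 1‖ := by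
          have h5 := norm_sub_norm_le (1 : ℂ) (ι f y)
          rw [norm_one, norm_sub_rev] at h5
          exact h5
        have h6 := mul_le_mul_of_nonneg_right hb (hepos y).le
        nlinarith [hepos y]
      have hgxb : 1 / 2 < ‖lam‖ * P nn x * ‖ι f ((⇑α)^[nn] x)‖ := by
        have hnorm : ‖lam * ((P nn x : ℝ) : ℂ) * ι f ((⇑α)^[nn] x)‖
            = ‖lam‖ * P nn x * ‖ι f ((⇑α)^[nn] x)‖ := by
          rw [norm_mul, norm_mul, Complex.norm_real, Real.norm_eq_abs,
            abs_of_pos (hPpos nn x)]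
        have hb : (1:ℝ) - ‖lam‖ * P nn x * ‖ι f ((⇑α)^[nn] x)‖
            ≤ ‖lam * ((P nn x : ℝ) : ℂ) * ι f ((⇑α)^[nn] x) - 1‖ := by
          rw [← hnorm]
          have h5 := norm_sub_norm_le (1 : ℂ) (lam * ((P nn x : ℝ) : ℂ) * ι f ((⇑α)^[nn] x))
          rw [norm_one, norm_sub_rev] at h5
          exact h5
        have h6 := mul_le_mul_of_nonneg_right hb (hepos x).le
        nlinarith [hepos x]
      have hgx'b : ‖lam‖ * P nn x' * ‖ι f y‖ * e x' < τ := by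
        have hnorm : ‖lam * ((P nn x' : ℝ) : ℂ) * ι f y‖ = ‖lam‖ * P nn x' * ‖ι f y‖ := by
          rw [norm_mul, norm_mul, Complex.norm_real, Real.norm_eq_abs,
            abs_of_pos (hPpos nn x')]
        rw [hnorm] at hgx'
        exact hgx'
      -- derive the contradiction
      have hLpos : (0:ℝ) ≤ ‖lam‖ := norm_nonneg lam
      have s1 : e ((⇑α)^[nn] x) / 2 < ‖lam‖ * P nn x * τ := by
        have t1 := mul_lt_mul_of_pos_right hgxb (hepos ((⇑α)^[nn] x))
        have t2 : ‖lam‖ * P nn x * (‖ι f ((⇑α)^[nn] x)‖ * e ((⇑α)^[nn] x))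
            ≤ ‖lam‖ * P nn x * τ :=
          mul_le_mul_of_nonneg_left hfx'.le (mul_nonneg hLpos (hPpos nn x).le)
        linarith
      have s2 : ‖lam‖ * P nn x' * e x' < 2 * τ := by
        have t1 : ‖lam‖ * P nn x' * e x' * (1/2) ≤ ‖lam‖ * P nn x' * e x' * ‖ι f y‖ :=
          mul_le_mul_of_nonneg_left hfyb.le
            (mul_nonneg (mul_nonneg hLpos (hPpos nn x').le) (hepos x').le)
        linarith [hgx'b]
      have hfinal : e ((⇑α)^[nn] x) * P nn x' * e x' / 2 < 2 * P nn x * τ ^ 2 := by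
        have t3 := mul_lt_mul_of_pos_right s1 (mul_pos (hPpos nn x') (hepos x'))
        have t4 := mul_lt_mul_of_pos_left s2 (mul_pos (hPpos nn x) hτpos)
        linarith
      have hlast : 2 * P nn x * τ ^ 2 ≤ e ((⇑α)^[nn] x) * P nn x' * e x' / 8 := by
        have h4 : 2 * P nn x * τ ^ 2 ≤ 2 * P nn x * (c / 4) :=
          mul_le_mul_of_nonneg_left hτc (by linarith [hPpos nn x])
        have hc4 : 2 * P nn x * (c / 4) = e ((⇑α)^[nn] x) * P nn x' * e x' / 8 := by
          rw [hcdef]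
          field_simp [(hPpos nn x).ne']
          ring
        linarith
      linarith [hfinal, hlast,
        mul_pos (mul_pos (hepos ((⇑α)^[nn] x)) (hPpos nn x')) (hepos x')]
    have hPapp2 : ∀ (mm : ℕ) (z : X), (∏ j ∈ range mm, w ((⇑α)^[j] z)) = P mm z :=
      fun _ _ => rfl
    -- one-step construction
    have step : ∀ (M : ℕ) (δ : ℝ), 0 < δ → ∃ (nv : ℕ) (Ev : Set X),
        M < nv ∧ MeasurableSet Ev ∧ Ev ⊆ K ∧
        (∃ gE : 𝓕, ι gE = Set.indicator (K \ Ev) 1 ∧ ‖gE‖ ≤ δ) ∧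
        (sSup ((fun x => ∏ j ∈ range nv, (w ((⇑α)^[j] x))⁻¹) '' Ev) *
         sSup ((fun x => ∏ j ∈ Icc 1 nv, w ((⇑α.symm)^[j] x)) '' Ev) ≤ δ) := by
      intro M δ hδ
      choose τ hτpos hτ using key
      have hBb : 1 ≤ M + N := by omega
      have hBne : (Finset.Icc 1 (M + N)).Nonempty := ⟨1, Finset.mem_Icc.mpr ⟨le_rfl, hBb⟩⟩
      set τm : ℝ := (Finset.Icc 1 (M + N)).inf' hBne τ with hτmdef
      have hτmpos : 0 < τm := by
        rw [hτmdef, Finset.lt_inf'_iff]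
        exact fun b _ => hτpos b
      set δ₀ : ℝ := Real.sqrt δ / 2 with hδ₀def
      have hδ₀pos : 0 < δ₀ := half_pos (Real.sqrt_pos.mpr hδ)
      set ε' : ℝ := min τm (min (δ * δ₀ / 8) (δ / 8)) with hε'def
      have hε'pos : 0 < ε' := lt_min hτmpos (lt_min (by positivity) (by linarith))
      have hε'τ : ε' ≤ τm := min_le_left _ _
      have hε'a : ε' ≤ δ * δ₀ / 8 := (min_le_right _ _).trans (min_le_left _ _)
      have hε'b : ε' ≤ δ / 8 := (min_le_right _ _).trans (min_le_right _ _)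
      obtain ⟨nv, lam, hnv1, hlam, f, hf, hTf⟩ := hsemi (Metric.ball χK ε') (Metric.ball χK ε')
        Metric.isOpen_ball Metric.isOpen_ball ⟨χK, Metric.mem_ball_self hε'pos⟩
        ⟨χK, Metric.mem_ball_self hε'pos⟩
      rw [Metric.mem_ball, dist_eq_norm] at hf hTf
      have hnvB : M + N < nv := by
        by_contra hcon
        push_neg at hcon
        have hmem : nv ∈ Finset.Icc 1 (M + N) := Finset.mem_Icc.mpr ⟨hnv1, hcon⟩
        have hτle : ε' ≤ τ nv := hε'τ.trans (Finset.inf'_le τ hmem)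
        exact hτ nv hnv1 f lam (hf.trans_le hτle) (hTf.trans_le hτle)
      have hnvN : N ≤ nv := by omega
      have hdisj := hN nv hnvN
      have hout : ∀ z ∈ K, (⇑α)^[nv] z ∉ K := by
        intro z hz hcon2
        have hmm : (⇑α)^[nv] z ∈ ((⇑α)^[nv] '' K) ∩ K := ⟨Set.mem_image_of_mem _ hz, hcon2⟩
        rw [hdisj] at hmm
        exact hmm
      have hout' : ∀ z ∈ K, (⇑α.symm)^[nv] z ∉ K := by
        intro z hz hcon2
        have hmm : z ∈ ((⇑α)^[nv] '' K) ∩ K := ⟨⟨_, hcon2, hai nv z⟩, hz⟩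
        rw [hdisj] at hmm
        exact hmm
      set h₁ : 𝓕 := f - χK with hh₁def
      set h₂ : 𝓕 := lam • (T ^ nv) f - χK with hh₂def
      obtain ⟨h₁', -, hh₁'1, hh₁'2, -, -⟩ := hinvIter nv h₁
      obtain ⟨-, h₂', -, -, hh₂'1, hh₂'2⟩ := hinvIter nv h₂
      set F₁ : Set X := K ∩ {z | 1/2 ≤ ‖ι h₁ z‖} with hF₁def
      set F₂ : Set X := K ∩ {z | 1/2 ≤ ‖ι h₂ z‖} with hF₂def
      set F₃ : Set X := K ∩ {z | δ₀ ≤ ‖ι h₁' z‖} with hF₃def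
      set F₄ : Set X := K ∩ {z | δ₀ ≤ ‖ι h₂' z‖} with hF₄def
      have hF₁m : MeasurableSet F₁ :=
        hKm.inter (measurableSet_le measurable_const (hι_meas h₁).norm)
      have hF₂m : MeasurableSet F₂ :=
        hKm.inter (measurableSet_le measurable_const (hι_meas h₂).norm)
      have hF₃m : MeasurableSet F₃ :=
        hKm.inter (measurableSet_le measurable_const (hι_meas h₁').norm)
      have hF₄m : MeasurableSet F₄ :=
        hKm.inter (measurableSet_le measurable_const (hι_meas h₂').norm)
      set Ev : Set X := K \ (F₁ ∪ F₂ ∪ F₃ ∪ F₄) with hEvdef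
      have hEvm : MeasurableSet Ev :=
        hKm.diff (((hF₁m.union hF₂m).union hF₃m).union hF₄m)
      have hEvK : Ev ⊆ K := Set.diff_subset
      have hind : ∀ (Fi : Set X), MeasurableSet Fi → ∀ (h : 𝓕) (t : ℝ), 0 < t →
          (∀ z ∈ Fi, t ≤ ‖ι h z‖) →
          ∃ u : 𝓕, ι u = Set.indicator Fi 1 ∧ ‖u‖ ≤ t⁻¹ * ‖h‖ := by
        intro Fi hFim h t ht hbd
        refine hmk t⁻¹ h (Set.indicator Fi 1) (by positivity)
          (measurable_one.indicator hFim) ?_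
        intro z
        by_cases hz : z ∈ Fi
        · rw [Set.indicator_of_mem hz, Pi.one_apply, norm_one, inv_mul_eq_div,
            le_div_iff₀ ht, one_mul]
          exact hbd z hz
        · rw [Set.indicator_of_notMem hz, norm_zero]
          positivity
      obtain ⟨u₁, hu₁1, hu₁2⟩ := hind F₁ hF₁m h₁ (1/2) (by norm_num) (fun z hz => hz.2)
      obtain ⟨u₂, hu₂1, hu₂2⟩ := hind F₂ hF₂m h₂ (1/2) (by norm_num) (fun z hz => hz.2)
      obtain ⟨u₃, hu₃1, hu₃2⟩ := hind F₃ hF₃m h₁' δ₀ hδ₀pos (fun z hz => hz.2)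
      obtain ⟨u₄, hu₄1, hu₄2⟩ := hind F₄ hF₄m h₂' δ₀ hδ₀pos (fun z hz => hz.2)
      set usum : 𝓕 := u₁ + u₂ + u₃ + u₄ with husumdef
      have hbound : ∀ z, ‖Set.indicator (K \ Ev) (1 : X → ℂ) z‖ ≤ 1 * ‖ι usum z‖ := by
        intro z
        rw [one_mul]
        by_cases hz : z ∈ K \ Ev
        · have hzF : z ∈ F₁ ∪ F₂ ∪ F₃ ∪ F₄ := by
            rcases hz with ⟨hzK, hzE⟩
            by_contra hzF
            exact hzE ⟨hzK, hzF⟩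
          have hval : ι usum z = Set.indicator F₁ (1 : X → ℂ) z + Set.indicator F₂ (1 : X → ℂ) z
              + Set.indicator F₃ (1 : X → ℂ) z + Set.indicator F₄ (1 : X → ℂ) z := by
            rw [husumdef, map_add, map_add, map_add, hu₁1, hu₂1, hu₃1, hu₄1]
            rfl
          have r1 : 0 ≤ (Set.indicator F₁ (1 : X → ℂ) z).re := by
            by_cases h : z ∈ F₁ <;> simp [h]
          have r2 : 0 ≤ (Set.indicator F₂ (1 : X → ℂ) z).re := by
            by_cases h : z ∈ F₂ <;> simp [h]
          have r3 : 0 ≤ (Set.indicator F₃ (1 : X → ℂ) z).re := by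
            by_cases h : z ∈ F₃ <;> simp [h]
          have r4 : 0 ≤ (Set.indicator F₄ (1 : X → ℂ) z).re := by
            by_cases h : z ∈ F₄ <;> simp [h]
          have hre : (1:ℝ) ≤ (ι usum z).re := by
            rw [hval]
            simp only [Complex.add_re]
            rcases hzF with ((h | h) | h) | h
            · have : (Set.indicator F₁ (1 : X → ℂ) z).re = 1 := by simp [h]
              linarith
            · have : (Set.indicator F₂ (1 : X → ℂ) z).re = 1 := by simp [h]
              linarith
            · have : (Set.indicator F₃ (1 : X → ℂ) z).re = 1 := by simp [h]
              linarith
            · have : (Set.indicator F₄ (1 : X → ℂ) z).re = 1 := by simp [h]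
              linarith
          calc ‖Set.indicator (K \ Ev) (1 : X → ℂ) z‖ = 1 := by
                rw [Set.indicator_of_mem hz, Pi.one_apply, norm_one]
            _ ≤ (ι usum z).re := hre
            _ ≤ ‖ι usum z‖ := Complex.re_le_norm _
        · rw [Set.indicator_of_notMem hz, norm_zero]
          positivity
      obtain ⟨gE, hgE1, hgE2⟩ := hmk 1 usum (Set.indicator (K \ Ev) 1) one_pos.le
        (measurable_one.indicator (hKm.diff hEvm)) hbound
      have hgE3 : ‖gE‖ ≤ δ := by
        have hsum : ‖usum‖ ≤ ‖u₁‖ + ‖u₂‖ + ‖u₃‖ + ‖u₄‖ := by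
          calc ‖usum‖ ≤ ‖u₁ + u₂ + u₃‖ + ‖u₄‖ := norm_add_le _ _
            _ ≤ ‖u₁ + u₂‖ + ‖u₃‖ + ‖u₄‖ := by linarith [norm_add_le (u₁ + u₂) u₃]
            _ ≤ ‖u₁‖ + ‖u₂‖ + ‖u₃‖ + ‖u₄‖ := by linarith [norm_add_le u₁ u₂]
        have e1 : ‖h₁‖ < ε' := hf
        have e2 : ‖h₂‖ < ε' := hTf
        have e3 : ‖h₁'‖ < ε' := by rw [hh₁'2]; exact hf
        have e4 : ‖h₂'‖ < ε' := by rw [hh₂'2]; exact hTf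
        have hd4 : δ₀⁻¹ * ε' ≤ δ / 8 := by
          rw [inv_mul_le_iff₀ hδ₀pos]
          calc ε' ≤ δ * δ₀ / 8 := hε'a
            _ = δ₀ * (δ / 8) := by ring
        have t1 : ‖u₁‖ ≤ 2 * ε' := by
          have h5 := hu₁2
          rw [show ((1:ℝ)/2)⁻¹ = 2 by norm_num] at h5
          linarith
        have t2 : ‖u₂‖ ≤ 2 * ε' := by
          have h5 := hu₂2
          rw [show ((1:ℝ)/2)⁻¹ = 2 by norm_num] at h5
          linarith
        have t3 : ‖u₃‖ ≤ δ₀⁻¹ * ε' :=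
          hu₃2.trans (mul_le_mul_of_nonneg_left e3.le (by positivity))
        have t4 : ‖u₄‖ ≤ δ₀⁻¹ * ε' :=
          hu₄2.trans (mul_le_mul_of_nonneg_left e4.le (by positivity))
        have h6 : ‖gE‖ ≤ 1 * ‖usum‖ := hgE2
        linarith [hε'b]
      have hnot : ∀ z ∈ Ev, z ∉ F₁ ∧ z ∉ F₂ ∧ z ∉ F₃ ∧ z ∉ F₄ := by
        intro z hz
        have h5 := hz.2
        simp only [Set.mem_union, not_or] at h5
        exact ⟨h5.1.1.1, h5.1.1.2, h5.1.2, h5.2⟩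
      have hlampos' : 0 < ‖lam‖ := norm_pos_iff.mpr hlam
      have hub1 : ∀ z ∈ Ev, ∏ j ∈ range nv, (w ((⇑α)^[j] z))⁻¹ ≤ 2 * ‖lam‖ * δ₀ := by
        intro z hz
        obtain ⟨hn1', hn2', hn3', hn4'⟩ := hnot z hz
        have hzK := hz.1
        have hb2 : ‖ι h₂ z‖ < 1/2 := by
          by_contra hcon; push_neg at hcon; exact hn2' ⟨hzK, hcon⟩
        have hb3 : ‖ι h₁' z‖ < δ₀ := by
          by_contra hcon; push_neg at hcon; exact hn3' ⟨hzK, hcon⟩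
        have hv2 : ι h₂ z = lam * ((P nv z : ℝ) : ℂ) * ι f ((⇑α)^[nv] z) - 1 := by
          rw [hh₂def, map_sub, Pi.sub_apply, hχK, Set.indicator_of_mem hzK, Pi.one_apply,
            map_smul, Pi.smul_apply, hTn nv f z, smul_eq_mul, ← mul_assoc, hPapp2]
        have hv3 : ι h₁' z = ι f ((⇑α)^[nv] z) := by
          rw [hh₁'1, Function.comp_apply, hh₁def, map_sub, Pi.sub_apply, hχK,
            Set.indicator_of_notMem (hout z hzK), sub_zero]
        have hlow : 1/2 < ‖lam‖ * P nv z * ‖ι f ((⇑α)^[nv] z)‖ := by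
          have hb : (1:ℝ) - ‖lam‖ * P nv z * ‖ι f ((⇑α)^[nv] z)‖ ≤ ‖ι h₂ z‖ := by
            rw [hv2]
            have h5 := norm_sub_norm_le (1:ℂ) (lam * ((P nv z : ℝ) : ℂ) * ι f ((⇑α)^[nv] z))
            rw [norm_one, norm_sub_rev] at h5
            calc (1:ℝ) - ‖lam‖ * P nv z * ‖ι f ((⇑α)^[nv] z)‖
                = 1 - ‖lam * ((P nv z : ℝ) : ℂ) * ι f ((⇑α)^[nv] z)‖ := by
                  rw [norm_mul, norm_mul, Complex.norm_real, Real.norm_eq_abs,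
                    abs_of_pos (hPpos nv z)]
              _ ≤ _ := h5
          linarith
        have hsm : ‖ι f ((⇑α)^[nv] z)‖ < δ₀ := by rw [← hv3]; exact hb3
        have hPinv : (P nv z)⁻¹ ≤ 2 * ‖lam‖ * δ₀ := by
          have h7 : 1/2 < ‖lam‖ * P nv z * δ₀ := by
            have h8 := mul_le_mul_of_nonneg_left hsm.le
              (mul_nonneg (norm_nonneg lam) (hPpos nv z).le)
            linarith
          have h8 : 1 ≤ (2 * ‖lam‖ * δ₀) * P nv z := by nlinarith
          calc (P nv z)⁻¹ ≤ (P nv z)⁻¹ * ((2 * ‖lam‖ * δ₀) * P nv z) :=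
                le_mul_of_one_le_right (inv_nonneg.mpr (hPpos nv z).le) h8
            _ = 2 * ‖lam‖ * δ₀ := by field_simp [(hPpos nv z).ne']
        rw [Finset.prod_inv_distrib, hPapp2]
        exact hPinv
      have hub2 : ∀ z ∈ Ev, ∏ j ∈ Icc 1 nv, w ((⇑α.symm)^[j] z) ≤ 2 * δ₀ / ‖lam‖ := by
        intro z hz
        obtain ⟨hn1', hn2', hn3', hn4'⟩ := hnot z hz
        have hzK := hz.1
        have hb1 : ‖ι h₁ z‖ < 1/2 := by
          by_contra hcon; push_neg at hcon; exact hn1' ⟨hzK, hcon⟩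
        have hb4 : ‖ι h₂' z‖ < δ₀ := by
          by_contra hcon; push_neg at hcon; exact hn4' ⟨hzK, hcon⟩
        have hfz : 1/2 < ‖ι f z‖ := by
          have hv1 : ι h₁ z = ι f z - 1 := by
            rw [hh₁def, map_sub, Pi.sub_apply, hχK, Set.indicator_of_mem hzK, Pi.one_apply]
          have h5 := norm_sub_norm_le (1:ℂ) (ι f z)
          rw [norm_one, norm_sub_rev] at h5
          rw [hv1] at hb1
          linarith
        have hv4 : ι h₂' z
            = lam * ((∏ j ∈ Icc 1 nv, w ((⇑α.symm)^[j] z) : ℝ) : ℂ) * ι f z := by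
          rw [hh₂'1, Function.comp_apply, hh₂def, map_sub, Pi.sub_apply, map_smul,
            Pi.smul_apply, hTn nv f ((⇑α.symm)^[nv] z), smul_eq_mul, ← mul_assoc, hai nv z,
            hχK, Set.indicator_of_notMem (hout' z hzK), sub_zero, hreidx nv z]
        have hQpos : (0:ℝ) < ∏ j ∈ Icc 1 nv, w ((⇑α.symm)^[j] z) :=
          Finset.prod_pos fun _ _ => hw_pos _
        have hb4' : ‖lam‖ * (∏ j ∈ Icc 1 nv, w ((⇑α.symm)^[j] z)) * ‖ι f z‖ < δ₀ := by
          rw [hv4, norm_mul, norm_mul, Complex.norm_real, Real.norm_eq_abs,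
            abs_of_pos hQpos] at hb4
          exact hb4
        rw [le_div_iff₀ hlampos']
        nlinarith [mul_pos hlampos' hQpos]
      refine ⟨nv, Ev, by omega, hEvm, hEvK, ⟨gE, hgE1, hgE3⟩, ?_⟩
      have hs1 : sSup ((fun x => ∏ j ∈ range nv, (w ((⇑α)^[j] x))⁻¹) '' Ev)
          ≤ 2 * ‖lam‖ * δ₀ :=
        Real.sSup_le (by rintro r ⟨z, hz, rfl⟩; exact hub1 z hz) (by positivity)
      have hs2 : sSup ((fun x => ∏ j ∈ Icc 1 nv, w ((⇑α.symm)^[j] x)) '' Ev)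
          ≤ 2 * δ₀ / ‖lam‖ :=
        Real.sSup_le (by rintro r ⟨z, hz, rfl⟩; exact hub2 z hz) (by positivity)
      have hsn2 : 0 ≤ sSup ((fun x => ∏ j ∈ Icc 1 nv, w ((⇑α.symm)^[j] x)) '' Ev) :=
        Real.sSup_nonneg (by
          rintro r ⟨z, hz, rfl⟩
          exact Finset.prod_nonneg fun _ _ => (hw_pos _).le)
      calc sSup ((fun x => ∏ j ∈ range nv, (w ((⇑α)^[j] x))⁻¹) '' Ev) *
            sSup ((fun x => ∏ j ∈ Icc 1 nv, w ((⇑α.symm)^[j] x)) '' Ev)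
          ≤ (2 * ‖lam‖ * δ₀) * (2 * δ₀ / ‖lam‖) :=
            mul_le_mul hs1 hs2 hsn2 (by positivity)
        _ = 4 * δ₀ ^ 2 := by
            have hcancel : ‖lam‖ * ‖lam‖⁻¹ = 1 := mul_inv_cancel₀ hlampos'.ne'
            field_simp [hlampos'.ne']
            linear_combination
        _ = δ := by rw [hδ₀def, div_pow, Real.sq_sqrt hδ.le]; ring
    -- recursive construction
    choose nnf EEf hlt hmeasf hsubf hgEf hbdf using step
    have hδs : ∀ k : ℕ, (0:ℝ) < 1 / ((k : ℝ) + 1) := by intro k; positivity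
    obtain ⟨d, hd0, hdS⟩ : ∃ d : ℕ → ℕ × Set X,
        d 0 = (nnf 0 (1 / (((0:ℕ) : ℝ) + 1)) (hδs 0), EEf 0 (1 / (((0:ℕ) : ℝ) + 1)) (hδs 0)) ∧
        ∀ k : ℕ, d (k + 1) = (nnf (d k).1 (1 / (((k + 1 : ℕ) : ℝ) + 1)) (hδs (k + 1)),
          EEf (d k).1 (1 / (((k + 1 : ℕ) : ℝ) + 1)) (hδs (k + 1))) := by
      refine ⟨fun k => Nat.rec
        (nnf 0 (1 / (((0:ℕ) : ℝ) + 1)) (hδs 0), EEf 0 (1 / (((0:ℕ) : ℝ) + 1)) (hδs 0))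
        (fun k ih => (nnf ih.1 (1 / (((k + 1 : ℕ) : ℝ) + 1)) (hδs (k + 1)),
          EEf ih.1 (1 / (((k + 1 : ℕ) : ℝ) + 1)) (hδs (k + 1)))) k, rfl, fun k => rfl⟩
    refine ⟨fun k => (d k).2, fun k => (d k).1, ?_, ?_, ?_, ?_, ?_, ?_⟩
    · intro k
      cases k with
      | zero => simp only [hd0]; exact hmeasf _ _ _
      | succ k => simp only [hdS k]; exact hmeasf _ _ _
    · intro k
      cases k with
      | zero => simp only [hd0]; exact hsubf _ _ _
      | succ k => simp only [hdS k]; exact hsubf _ _ _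
    · apply strictMono_nat_of_lt_succ
      intro k
      simp only [hdS k]
      exact hlt _ _ _
    · intro k
      cases k with
      | zero =>
        simp only [hd0]
        have h5 := hlt 0 (1 / (((0:ℕ) : ℝ) + 1)) (hδs 0)
        omega
      | succ k =>
        simp only [hdS k]
        have h5 := hlt (d k).1 (1 / (((k + 1 : ℕ) : ℝ) + 1)) (hδs (k + 1))
        omega
    · have hgex : ∀ k : ℕ, ∃ gE : 𝓕,
          ι gE = Set.indicator (K \ (d k).2) 1 ∧ ‖gE‖ ≤ 1 / ((k : ℝ) + 1) := by
        intro k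
        cases k with
        | zero => rw [hd0]; exact hgEf _ _ _
        | succ k => rw [hdS k]; exact hgEf _ _ _
      choose gseq hg1 hg2 using hgex
      refine ⟨gseq, hg1, ?_⟩
      exact squeeze_zero (fun k => norm_nonneg _) hg2 tendsto_one_div_add_atTop_nhds_zero_nat
    · have hb : ∀ k : ℕ,
          sSup ((fun x => ∏ j ∈ range ((d k).1), (w ((⇑α)^[j] x))⁻¹) '' (d k).2) *
          sSup ((fun x => ∏ j ∈ Icc 1 ((d k).1), w ((⇑α.symm)^[j] x)) '' (d k).2)
            ≤ 1 / ((k : ℝ) + 1) := by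
        intro k
        cases k with
        | zero => rw [hd0]; exact hbdf _ _ _
        | succ k => rw [hdS k]; exact hbdf _ _ _
      have hbn : ∀ k : ℕ, 0 ≤
          sSup ((fun x => ∏ j ∈ range ((d k).1), (w ((⇑α)^[j] x))⁻¹) '' (d k).2) *
          sSup ((fun x => ∏ j ∈ Icc 1 ((d k).1), w ((⇑α.symm)^[j] x)) '' (d k).2) := by
        intro k
        apply mul_nonneg
        · exact Real.sSup_nonneg (by
            rintro r ⟨z, hz, rfl⟩
            exact Finset.prod_nonneg fun _ _ => inv_nonneg.mpr (hw_pos _).le)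
        · exact Real.sSup_nonneg (by
            rintro r ⟨z, hz, rfl⟩
            exact Finset.prod_nonneg fun _ _ => (hw_pos _).le)
      exact squeeze_zero hbn hb tendsto_one_div_add_atTop_nhds_zero_nat
  · -- ## Converse direction
    intro hcond O₁ O₂ hO₁ hO₂ hne₁ hne₂
    obtain ⟨f, ⟨⟨Cf, hCf⟩, Kf, hKf, hfsupp⟩, hfO⟩ := hdense.exists_mem_open hO₁ hne₁
    obtain ⟨g, ⟨⟨Cg, hCg⟩, Kg, hKg, hgsupp⟩, hgO⟩ := hdense.exists_mem_open hO₂ hne₂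
    obtain ⟨ε₁, hε₁, hball₁⟩ := Metric.isOpen_iff.mp hO₁ f hfO
    obtain ⟨ε₂, hε₂, hball₂⟩ := Metric.isOpen_iff.mp hO₂ g hgO
    set K : Set X := Kf ∪ Kg with hKdef
    have hK : IsCompact K := hKf.union hKg
    by_cases hKne : K.Nonempty
    swap
    · -- K is empty: f = g = 0
      have hKe : K = ∅ := Set.not_nonempty_iff_eq_empty.mp hKne
      have hKfe : Kf = ∅ := by
        apply Set.eq_empty_of_subset_empty; rw [← hKe]; exact Set.subset_union_left
      have hKge : Kg = ∅ := by
        apply Set.eq_empty_of_subset_empty; rw [← hKe]; exact Set.subset_union_right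
      have hf0 : f = 0 := by
        apply hι_inj; rw [map_zero]; funext z
        exact hfsupp z (by rw [hKfe]; exact Set.notMem_empty z)
      have hg0 : g = 0 := by
        apply hι_inj; rw [map_zero]; funext z
        exact hgsupp z (by rw [hKge]; exact Set.notMem_empty z)
      refine ⟨1, 1, le_rfl, one_ne_zero, f, hfO, ?_⟩
      rw [hf0]
      simpa [hg0] using hgO
    -- main case
    obtain ⟨E, n, hEmeas, hEK, hmono, hn1, ⟨gk, hgk, hgk0⟩, hAB⟩ := hcond K hK
    obtain ⟨χK, hχK⟩ := hchi K hK
    have hKm : MeasurableSet K := hmeasSet χK K hχK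
    have hχKpos : 0 < ‖χK‖ := by
      rw [norm_pos_iff]
      intro h0
      obtain ⟨x0, hx0⟩ := hKne
      rw [h0, map_zero] at hχK
      have := congrFun hχK x0
      simp [Set.indicator_of_mem hx0] at this
    set Cf' : ℝ := max Cf 1 with hCf'def
    set Cg' : ℝ := max Cg 1 with hCg'def
    have hCf' : ∀ x, ‖ι f x‖ ≤ Cf' := fun x => (hCf x).trans (le_max_left _ _)
    have hCg' : ∀ x, ‖ι g x‖ ≤ Cg' := fun x => (hCg x).trans (le_max_left _ _)
    have hCf'pos : (0:ℝ) < Cf' := lt_of_lt_of_le one_pos (le_max_right _ _)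
    have hCg'pos : (0:ℝ) < Cg' := lt_of_lt_of_le one_pos (le_max_right _ _)
    set Cm : ℝ := max Cf' Cg' with hCmdef
    have hCmpos : (0:ℝ) < Cm := lt_of_lt_of_le hCf'pos (le_max_left _ _)
    set ε : ℝ := min ε₁ ε₂ with hεdef
    have hεpos : 0 < ε := lt_min hε₁ hε₂
    set A : ℕ → ℝ := fun k => sSup ((fun x => ∏ j ∈ range (n k), (w ((⇑α)^[j] x))⁻¹) '' E k)
      with hAdef
    set B : ℕ → ℝ := fun k => sSup ((fun x => ∏ j ∈ Icc 1 (n k), w ((⇑α.symm)^[j] x)) '' E k)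
      with hBdef
    -- pick a good k
    have hev1 : ∀ᶠ k in atTop, Cm * ‖gk k‖ < min (ε / 2) (Cm * ‖χK‖) := by
      have : Tendsto (fun k => Cm * ‖gk k‖) atTop (nhds 0) := by
        simpa using hgk0.const_mul Cm
      exact this.eventually_lt_const (lt_min (by linarith) (by positivity))
    have hev2 : ∀ᶠ k in atTop, (Cm * ‖χK‖) * Real.sqrt (A k * B k) < ε / 2 := by
      have h1 : Tendsto (fun k => Real.sqrt (A k * B k)) atTop (nhds 0) := by
        have h0 : Tendsto Real.sqrt (nhds 0) (nhds 0) := by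
          simpa using Real.continuous_sqrt.tendsto 0
        exact h0.comp hAB
      have : Tendsto (fun k => (Cm * ‖χK‖) * Real.sqrt (A k * B k)) atTop (nhds 0) := by
        simpa using h1.const_mul (Cm * ‖χK‖)
      exact this.eventually_lt_const (by linarith)
    obtain ⟨k, hk1, hk2⟩ := (hev1.and hev2).exists
    have hgklt : Cm * ‖gk k‖ < ε / 2 := lt_of_lt_of_le hk1 (min_le_left _ _)
    -- E k is nonempty
    have hEne : (E k).Nonempty := by
      rw [Set.nonempty_iff_ne_empty]
      intro hEe
      have : gk k = χK := by
        apply hι_inj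
        rw [hgk k, hχK, hEe, Set.diff_empty]
      rw [this] at hk1
      have := lt_of_lt_of_le hk1 (min_le_right _ _)
      linarith
    set m : ℕ := n k with hmdef
    have hm1 : 1 ≤ m := hn1 k
    obtain ⟨Ci, hCi⟩ := hw_inv_bdd
    obtain ⟨Cw, hCw⟩ := hw_bdd
    have hA_bdd : BddAbove ((fun x => ∏ j ∈ range m, (w ((⇑α)^[j] x))⁻¹) '' E k) := by
      refine ⟨(max Ci 1) ^ m, ?_⟩
      rintro r ⟨x, -, rfl⟩
      calc ∏ j ∈ range m, (w ((⇑α)^[j] x))⁻¹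
          ≤ ∏ _j ∈ range m, max Ci 1 :=
            Finset.prod_le_prod (fun j _ => inv_nonneg.mpr (hw_pos _).le)
              (fun j _ => (hCi _).trans (le_max_left _ _))
        _ = (max Ci 1) ^ m := by rw [Finset.prod_const, card_range]
    have hB_bdd : BddAbove ((fun x => ∏ j ∈ Icc 1 m, w ((⇑α.symm)^[j] x)) '' E k) := by
      refine ⟨(max Cw 1) ^ (Icc 1 m).card, ?_⟩
      rintro r ⟨x, -, rfl⟩
      calc ∏ j ∈ Icc 1 m, w ((⇑α.symm)^[j] x)
          ≤ ∏ _j ∈ Icc 1 m, max Cw 1 :=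
            Finset.prod_le_prod (fun j _ => (hw_pos _).le)
              (fun j _ => (hCw _).trans (le_max_left _ _))
        _ = (max Cw 1) ^ (Icc 1 m).card := by rw [Finset.prod_const]
    have hAle : ∀ x ∈ E k, ∏ j ∈ range m, (w ((⇑α)^[j] x))⁻¹ ≤ A k :=
      fun x hx => le_csSup hA_bdd ⟨x, hx, rfl⟩
    have hBle : ∀ x ∈ E k, ∏ j ∈ Icc 1 m, w ((⇑α.symm)^[j] x) ≤ B k :=
      fun x hx => le_csSup hB_bdd ⟨x, hx, rfl⟩
    obtain ⟨x₀, hx₀⟩ := hEne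
    have hApos : 0 < A k :=
      lt_of_lt_of_le (Finset.prod_pos fun j _ => inv_pos.mpr (hw_pos _)) (hAle x₀ hx₀)
    have hBpos : 0 < B k :=
      lt_of_lt_of_le (Finset.prod_pos fun j _ => hw_pos _) (hBle x₀ hx₀)
    set lam : ℝ := Real.sqrt (A k / B k) with hlamdef
    have hlampos : 0 < lam := Real.sqrt_pos.mpr (div_pos hApos hBpos)
    have hlamB : lam * B k = Real.sqrt (A k * B k) := by
      rw [show A k * B k = A k / B k * (B k) ^ 2 by field_simp [hBpos.ne']]
      rw [Real.sqrt_mul (by positivity) ((B k) ^ 2), Real.sqrt_sq hBpos.le]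
    have hlamA : lam⁻¹ * A k = Real.sqrt (A k * B k) := by
      rw [show lam⁻¹ = Real.sqrt (B k / A k) by
        rw [hlamdef, ← Real.sqrt_inv]; congr 1; rw [inv_div]]
      rw [show A k * B k = B k / A k * (A k) ^ 2 by field_simp [hApos.ne']]
      rw [Real.sqrt_mul (by positivity) ((A k) ^ 2), Real.sqrt_sq hApos.le]
    obtain ⟨fE, hfE1, -⟩ := hres f (E k) (hEmeas k)
    obtain ⟨gE, hgE1, -⟩ := hres g (E k) (hEmeas k)
    have hsupp_bound : ∀ (h : 𝓕) (C : ℝ) (Kh : Set X), (∀ x, ‖ι h x‖ ≤ C) → 0 ≤ C →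
        (∀ x ∉ Kh, ι h x = 0) → Kh ⊆ K → ∀ (hE : 𝓕), ι hE = Set.indicator (E k) (ι h) →
        ‖h - hE‖ ≤ C * ‖gk k‖ := by
      intro h C Kh hC hC0 hsupp hKh hE hhE
      refine hnb _ _ _ hC0 ?_
      intro z
      rw [map_sub, Pi.sub_apply, hhE, hgk k]
      by_cases hz : z ∈ E k
      · rw [Set.indicator_of_mem hz, sub_self, norm_zero]
        positivity
      · rw [Set.indicator_of_notMem hz, sub_zero]
        by_cases hzK : z ∈ K
        · rw [Set.indicator_of_mem (show z ∈ K \ E k from ⟨hzK, hz⟩)]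
          simpa using hC z
        · rw [hsupp z (fun hzh => hzK (hKh hzh)), norm_zero]
          positivity
    have hdf : ‖f - fE‖ ≤ Cf' * ‖gk k‖ :=
      hsupp_bound f Cf' Kf hCf' hCf'pos.le hfsupp Set.subset_union_left fE hfE1
    have hdg : ‖g - gE‖ ≤ Cg' * ‖gk k‖ :=
      hsupp_bound g Cg' Kg hCg' hCg'pos.le hgsupp Set.subset_union_right gE hgE1
    obtain ⟨χE, hχE1, hχE2⟩ := hmk 1 χK (Set.indicator (E k) 1) one_pos.le
      (measurable_one.indicator (hEmeas k)) (by
        intro z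
        rw [one_mul, hχK]
        by_cases hz : z ∈ E k
        · rw [Set.indicator_of_mem hz, Set.indicator_of_mem (hEK k hz)]
        · rw [Set.indicator_of_notMem hz, norm_zero]
          positivity)
    have hχEnorm : ‖χE‖ ≤ ‖χK‖ := by linarith [hχE2]
    obtain ⟨mα, mσ, hmα1, hmα2, hmσ1, hmσ2⟩ := hinvIter m χE
    have hTfE : ‖(T ^ m) fE‖ ≤ (Cf' * B k) * ‖mα‖ := by
      refine hnb _ _ _ (by positivity) ?_
      intro z
      rw [hTn m fE z, hmα1]
      simp only [Function.comp_apply]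
      by_cases hz : (⇑α)^[m] z ∈ E k
      · rw [norm_mul, hfE1, Set.indicator_of_mem hz, hχE1, Set.indicator_of_mem hz]
        have hprod : ∏ j ∈ range m, w ((⇑α)^[j] z) ≤ B k := by
          have hz2 : (∏ j ∈ range m, w ((⇑α)^[j] z))
              = ∏ j ∈ Icc 1 m, w ((⇑α.symm)^[j] ((⇑α)^[m] z)) := by
            conv_lhs => rw [show z = (⇑α.symm)^[m] ((⇑α)^[m] z) from (hai' m z).symm]
            exact hreidx m ((⇑α)^[m] z)
          rw [hz2]
          exact hBle _ hz
        have hprodpos : (0:ℝ) ≤ ∏ j ∈ range m, w ((⇑α)^[j] z) :=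
          (Finset.prod_pos fun j _ => hw_pos _).le
        rw [Complex.norm_real, Real.norm_eq_abs, abs_of_nonneg hprodpos]
        have h1 : ‖(1 : X → ℂ) ((⇑α)^[m] z)‖ = 1 := by norm_num
        rw [h1, mul_one]
        calc (∏ j ∈ range m, w ((⇑α)^[j] z)) * ‖ι f ((⇑α)^[m] z)‖
            ≤ B k * Cf' := mul_le_mul hprod (hCf' _) (norm_nonneg _) hBpos.le
          _ = Cf' * B k := by ring
      · rw [hfE1, Set.indicator_of_notMem hz, mul_zero, norm_zero]
        positivity
    have hSgE : ‖(S ^ m) gE‖ ≤ (Cg' * A k) * ‖mσ‖ := by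
      refine hnb _ _ _ (by positivity) ?_
      intro z
      rw [hSn m gE z, hmσ1]
      simp only [Function.comp_apply]
      by_cases hz : (⇑α.symm)^[m] z ∈ E k
      · rw [norm_mul, hgE1, Set.indicator_of_mem hz, hχE1, Set.indicator_of_mem hz]
        have hQpos : (0:ℝ) < ∏ j ∈ Icc 1 m, w ((⇑α.symm)^[j] z) :=
          Finset.prod_pos fun j _ => hw_pos _
        have hprod : (∏ j ∈ Icc 1 m, w ((⇑α.symm)^[j] z))⁻¹ ≤ A k := by
          have hz2 : (∏ j ∈ Icc 1 m, w ((⇑α.symm)^[j] z))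
              = ∏ j ∈ range m, w ((⇑α)^[j] ((⇑α.symm)^[m] z)) := by
            conv_lhs => rw [show z = (⇑α)^[m] ((⇑α.symm)^[m] z) from (hai m z).symm]
            exact hreidx2 m ((⇑α.symm)^[m] z)
          rw [hz2, ← Finset.prod_inv_distrib]
          exact hAle _ hz
        rw [norm_inv, Complex.norm_real, Real.norm_eq_abs, abs_of_pos hQpos]
        have h1 : ‖(1 : X → ℂ) ((⇑α.symm)^[m] z)‖ = 1 := by norm_num
        rw [h1, mul_one]
        calc (∏ j ∈ Icc 1 m, w ((⇑α.symm)^[j] z))⁻¹ * ‖ι g ((⇑α.symm)^[m] z)‖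
            ≤ A k * Cg' := mul_le_mul hprod (hCg' _) (norm_nonneg _) hApos.le
          _ = Cg' * A k := by ring
      · rw [hgE1, Set.indicator_of_notMem hz, mul_zero, norm_zero]
        positivity
    set u : 𝓕 := fE + ((lam : ℂ))⁻¹ • ((S ^ m) gE) with hudef
    have hlamC : ((lam : ℝ) : ℂ) ≠ 0 := by exact_mod_cast hlampos.ne'
    have hTu : (lam : ℂ) • (T ^ m) u = (lam : ℂ) • ((T ^ m) fE) + gE := by
      rw [hudef, map_add, map_smul, hTSn m gE, smul_add, smul_smul,
        mul_inv_cancel₀ hlamC, one_smul]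
    have hnormlam : ‖((lam : ℝ) : ℂ)‖ = lam := by
      rw [Complex.norm_real, Real.norm_eq_abs, abs_of_pos hlampos]
    have hmσK : ‖mσ‖ ≤ ‖χK‖ := by rw [hmσ2]; exact hχEnorm
    have hmαK : ‖mα‖ ≤ ‖χK‖ := by rw [hmα2]; exact hχEnorm
    have hεle₁ : ε ≤ ε₁ := min_le_left _ _
    have hεle₂ : ε ≤ ε₂ := min_le_right _ _
    have hCf'Cm : Cf' ≤ Cm := le_max_left _ _
    have hCg'Cm : Cg' ≤ Cm := le_max_right _ _
    have hsq : Real.sqrt (A k * B k) = lam⁻¹ * A k := hlamA.symm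
    have hu1 : dist u f < ε₁ := by
      rw [dist_eq_norm]
      have heq : u - f = (fE - f) + ((lam : ℂ))⁻¹ • ((S ^ m) gE) := by
        rw [hudef]; abel
      have hb1 : ‖fE - f‖ ≤ Cm * ‖gk k‖ := by
        rw [norm_sub_rev]
        exact hdf.trans (mul_le_mul_of_nonneg_right hCf'Cm (norm_nonneg _))
      have hb2 : ‖((lam : ℂ))⁻¹ • ((S ^ m) gE)‖ ≤ Cm * ‖χK‖ * Real.sqrt (A k * B k) := by
        rw [norm_smul, norm_inv, hnormlam]
        calc lam⁻¹ * ‖(S ^ m) gE‖ ≤ lam⁻¹ * ((Cg' * A k) * ‖mσ‖) := by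
              apply mul_le_mul_of_nonneg_left hSgE (by positivity)
          _ ≤ lam⁻¹ * ((Cm * A k) * ‖χK‖) := by
              apply mul_le_mul_of_nonneg_left ?_ (by positivity)
              apply mul_le_mul (mul_le_mul_of_nonneg_right hCg'Cm hApos.le) hmσK
                (norm_nonneg _) (by positivity)
          _ = Cm * ‖χK‖ * (lam⁻¹ * A k) := by ring
          _ = Cm * ‖χK‖ * Real.sqrt (A k * B k) := by rw [hlamA]
      calc ‖u - f‖ ≤ ‖fE - f‖ + ‖((lam : ℂ))⁻¹ • ((S ^ m) gE)‖ := by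
            rw [heq]; exact norm_add_le _ _
        _ < ε / 2 + ε / 2 := by
            apply add_lt_add_of_lt_of_le (lt_of_le_of_lt hb1 hgklt) (hb2.trans hk2.le)
        _ ≤ ε₁ := by linarith
    have hu2 : dist ((lam : ℂ) • (T ^ m) u) g < ε₂ := by
      rw [dist_eq_norm, hTu]
      have heq : (lam : ℂ) • ((T ^ m) fE) + gE - g = (lam : ℂ) • ((T ^ m) fE) + (gE - g) := by
        abel
      have hb1 : ‖(lam : ℂ) • ((T ^ m) fE)‖ ≤ Cm * ‖χK‖ * Real.sqrt (A k * B k) := by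
        rw [norm_smul, hnormlam]
        calc lam * ‖(T ^ m) fE‖ ≤ lam * ((Cf' * B k) * ‖mα‖) := by
              apply mul_le_mul_of_nonneg_left hTfE hlampos.le
          _ ≤ lam * ((Cm * B k) * ‖χK‖) := by
              apply mul_le_mul_of_nonneg_left ?_ hlampos.le
              apply mul_le_mul (mul_le_mul_of_nonneg_right hCf'Cm hBpos.le) hmαK
                (norm_nonneg _) (by positivity)
          _ = Cm * ‖χK‖ * (lam * B k) := by ring
          _ = Cm * ‖χK‖ * Real.sqrt (A k * B k) := by rw [hlamB]
      have hb2 : ‖gE - g‖ ≤ Cm * ‖gk k‖ := by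
        rw [norm_sub_rev]
        exact hdg.trans (mul_le_mul_of_nonneg_right hCg'Cm (norm_nonneg _))
      calc ‖(lam : ℂ) • ((T ^ m) fE) + gE - g‖
          ≤ ‖(lam : ℂ) • ((T ^ m) fE)‖ + ‖gE - g‖ := by rw [heq]; exact norm_add_le _ _
        _ < ε / 2 + ε / 2 := add_lt_add_of_le_of_lt (hb1.trans hk2.le) (lt_of_le_of_lt hb2 hgklt)
        _ ≤ ε₂ := by linarith
    exact ⟨m, (lam : ℂ), hm1, hlamC, u, hball₁ (Metric.mem_ball.mpr hu1),
      hball₂ (Metric.mem_ball.mpr hu2)⟩
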